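/- At every point A of the open set U = {A ∈ ℝⁿ : 0 < Aᵢ < Nᵢ for all i, 0 < M1 − Σᵢ Aᵢ < n0}, the GL odds-ratio objective G is differentiable and its gradient is the GL residual map g(A), whose i-th component is −Lᵢ − log(a0(A)) − log(Bᵢ(A)) + log(Aᵢ) + log(b0(A)). In other words, the root-finding problem g(A) = 0 of Greenland–Longnecker is exactly the stationarity condition ∇G(A) = 0. -/

import Mathlib

open Finset

/-- The Greenland–Longnecker odds-ratio objective `G`, defined on Euclidean space. -/
noncomputable def glOR_G (n : ℕ) (L N : Fin n → ℝ) (n0 M1 : ℝ)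
    (A : EuclideanSpace ℝ (Fin n)) : ℝ :=
  -(∑ i, L i * A i)
    + ((M1 - ∑ i, A i) * Real.log (M1 - ∑ i, A i) - (M1 - ∑ i, A i))
    + (∑ i, ((N i - A i) * Real.log (N i - A i) - (N i - A i)))
    + (∑ i, (A i * Real.log (A i) - A i))
    + ((n0 - (M1 - ∑ i, A i)) * Real.log (n0 - (M1 - ∑ i, A i))
        - (n0 - (M1 - ∑ i, A i)))

/-- The Greenland–Longnecker residual map `g`:
`g(A)ᵢ = -Lᵢ - log a₀(A) - log Bᵢ(A) + log Aᵢ + log b₀(A)`. -/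
noncomputable def glOR_g (n : ℕ) (L N : Fin n → ℝ) (n0 M1 : ℝ)
    (A : EuclideanSpace ℝ (Fin n)) : EuclideanSpace ℝ (Fin n) :=
  WithLp.toLp 2 fun i => -L i - Real.log (M1 - ∑ j, A j) - Real.log (N i - A i)
    + Real.log (A i) + Real.log (n0 - (M1 - ∑ j, A j))

/-- At every point of the open feasible set `U`, the GL odds-ratio objective `G` is
differentiable and its gradient is the GL residual map `g`; hence the GL root-finding
problem `g(A) = 0` is exactly the stationarity condition `∇G(A) = 0`. -/
theorem glOR_hasGradientAt
    (n : ℕ) (hn : 1 ≤ n) (L N : Fin n → ℝ) (hN : ∀ i, 0 < N i)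
    (n0 M1 : ℝ) (hn0 : 0 < n0) (hM1 : 0 < M1)
    (A : EuclideanSpace ℝ (Fin n))
    (hA : (∀ i, 0 < A i ∧ A i < N i) ∧ 0 < M1 - ∑ i, A i ∧ M1 - ∑ i, A i < n0) :
    HasGradientAt (glOR_G n L N n0 M1) (glOR_g n L N n0 M1 A) A := by
  obtain ⟨hAi, ha0, hb0⟩ := hA
  have ha0' : (M1 - ∑ i, A i) ≠ 0 := ne_of_gt ha0
  have hb0' : (n0 - (M1 - ∑ i, A i)) ≠ 0 := ne_of_gt (by linarith)
  have hphi : ∀ x : ℝ, x ≠ 0 →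
      HasDerivAt (fun y => y * Real.log y - y) (Real.log x) x := fun x hx => by
    simpa using (Real.hasDerivAt_mul_log hx).fun_sub (hasDerivAt_id' x)
  -- sum functional
  set s : EuclideanSpace ℝ (Fin n) →L[ℝ] ℝ :=
    ∑ i, (EuclideanSpace.proj i : EuclideanSpace ℝ (Fin n) →L[ℝ] ℝ) with hs
  have hsum : HasFDerivAt (fun A : EuclideanSpace ℝ (Fin n) => ∑ i, A i) s A := by
    simpa [hs] using HasFDerivAt.fun_sum (fun i (_ : i ∈ Finset.univ) =>
      (EuclideanSpace.proj (𝕜 := ℝ) i).hasFDerivAt (x := A))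
  -- piece 1
  have h1 : HasFDerivAt (fun A : EuclideanSpace ℝ (Fin n) => -(∑ i, L i * A i))
      (-(∑ i, L i • (EuclideanSpace.proj i : EuclideanSpace ℝ (Fin n) →L[ℝ] ℝ))) A := by
    exact (HasFDerivAt.fun_sum (fun i (_ : i ∈ Finset.univ) =>
      ((EuclideanSpace.proj (𝕜 := ℝ) i).hasFDerivAt (x := A)).const_mul (L i))).fun_neg
  -- piece 2 : a0 term
  have ha0f : HasFDerivAt (fun A : EuclideanSpace ℝ (Fin n) => M1 - ∑ i, A i) (-s) A :=
    hsum.const_sub M1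
  have h2 : HasFDerivAt (fun A : EuclideanSpace ℝ (Fin n) =>
      (M1 - ∑ i, A i) * Real.log (M1 - ∑ i, A i) - (M1 - ∑ i, A i))
      (Real.log (M1 - ∑ i, A i) • (-s)) A :=
    by exact (hphi (M1 - ∑ i, A i) ha0').comp_hasFDerivAt A ha0f
  -- piece 3 : B terms
  have h3 : HasFDerivAt (fun A : EuclideanSpace ℝ (Fin n) =>
      ∑ i, ((N i - A i) * Real.log (N i - A i) - (N i - A i)))
      (∑ i, Real.log (N i - A i) •
        (-(EuclideanSpace.proj i : EuclideanSpace ℝ (Fin n) →L[ℝ] ℝ))) A := by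
    refine HasFDerivAt.fun_sum (fun i _ => ?_)
    exact (hphi _ (ne_of_gt (by linarith [(hAi i).2]))).comp_hasFDerivAt A
      (((EuclideanSpace.proj (𝕜 := ℝ) i).hasFDerivAt (x := A)).const_sub (N i))
  -- piece 4 : A terms
  have h4 : HasFDerivAt (fun A : EuclideanSpace ℝ (Fin n) =>
      ∑ i, (A i * Real.log (A i) - A i))
      (∑ i, Real.log (A i) •
        (EuclideanSpace.proj i : EuclideanSpace ℝ (Fin n) →L[ℝ] ℝ)) A := by
    refine HasFDerivAt.fun_sum (fun i _ => ?_)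
    exact (hphi _ (ne_of_gt (hAi i).1)).comp_hasFDerivAt A
      ((EuclideanSpace.proj (𝕜 := ℝ) i).hasFDerivAt (x := A))
  -- piece 5 : b0 term
  have h5 : HasFDerivAt (fun A : EuclideanSpace ℝ (Fin n) =>
      (n0 - (M1 - ∑ i, A i)) * Real.log (n0 - (M1 - ∑ i, A i)) - (n0 - (M1 - ∑ i, A i)))
      (Real.log (n0 - (M1 - ∑ i, A i)) • (-(-s))) A :=
    by exact (hphi (n0 - (M1 - ∑ i, A i)) hb0').comp_hasFDerivAt A (ha0f.const_sub n0)
  have hG : HasFDerivAt (glOR_G n L N n0 M1)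
      ((-(∑ i, L i • (EuclideanSpace.proj i : EuclideanSpace ℝ (Fin n) →L[ℝ] ℝ)))
        + Real.log (M1 - ∑ i, A i) • (-s)
        + (∑ i, Real.log (N i - A i) •
            (-(EuclideanSpace.proj i : EuclideanSpace ℝ (Fin n) →L[ℝ] ℝ)))
        + (∑ i, Real.log (A i) •
            (EuclideanSpace.proj i : EuclideanSpace ℝ (Fin n) →L[ℝ] ℝ))
        + Real.log (n0 - (M1 - ∑ i, A i)) • (-(-s))) A := by
    exact (((h1.add h2).add h3).add h4).add h5
  rw [hasGradientAt_iff_hasFDerivAt]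
  convert hG using 1
  · rfl
  · rfl
  · rfl
  · rfl
  apply ContinuousLinearMap.ext
  intro v
  simp only [InnerProductSpace.toDual_apply_apply, ContinuousLinearMap.add_apply,
    ContinuousLinearMap.neg_apply, ContinuousLinearMap.sum_apply,
    ContinuousLinearMap.smul_apply, PiLp.proj_apply, hs,
    smul_eq_mul, neg_neg, PiLp.inner_apply, RCLike.inner_apply, starRingEnd_apply,
    glOR_g, star_trivial, mul_neg, Finset.mul_sum, ← Finset.sum_neg_distrib,
    ← Finset.sum_add_distrib]
  exact Finset.sum_congr rfl fun i _ => by ring
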